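/- Let Γ(z) = Σ_n c_n z^n with γ(r) = Σ_n |c_n| r^n < ∞ and γ'(r) = Σ_n n|c_n|r^{n-1} < ∞. Let Δ_N be the self-adjoint average operator of the previous setting with ‖Δ_N‖ ≤ δ ≤ r, and let O be supported on N_O sites. Then ‖[Γ(Δ_N), [Γ(Δ_N), O]]‖ ≤ (4 N_O² / N²) ‖O‖ δ² γ'(δ)². -/

import Mathlib

open scoped Matrix.Norms.L2Operator

/-- `x` acting on the `k`-th tensor factor of `(ℂ^d)^{⊗N}`, realized as a matrix indexed by
configurations `Fin N → Fin d`. -/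
noncomputable def site {d N : ℕ} (x : Matrix (Fin d) (Fin d) ℂ) (k : Fin N) :
    Matrix (Fin N → Fin d) (Fin N → Fin d) ℂ :=
  fun f g => x (f k) (g k) * ∏ j ∈ Finset.univ.erase k, (if f j = g j then (1 : ℂ) else 0)

variable {d N : ℕ}

private lemma delta_eq_sum (k : Fin N) (f h : Fin N → Fin d) :
    (∏ j ∈ Finset.univ.erase k, if f j = h j then (1:ℂ) else 0)
      = ∑ x : Fin d, if h = Function.update f k x then (1:ℂ) else 0 := by
  by_cases hh : ∀ j, j ≠ k → f j = h j
  · have hup : h = Function.update f k (h k) := by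
      funext j
      by_cases hj : j = k
      · subst hj; simp
      · simp [Function.update_of_ne hj, (hh j hj).symm]
    have h1 : (∏ j ∈ Finset.univ.erase k, if f j = h j then (1:ℂ) else 0) = 1 :=
      Finset.prod_eq_one fun j hj => by
        simp [hh j (Finset.ne_of_mem_erase hj)]
    have h2 : ∀ x : Fin d, (h = Function.update f k x) ↔ (x = h k) := by
      intro x
      constructor
      · intro e; have := congrFun e k; simpa using this.symm
      · intro e; rw [e]; exact hup
    simp only [h1, h2]
    simp
  · push_neg at hh
    obtain ⟨j, hj, hne⟩ := hh
    have h1 : (∏ j ∈ Finset.univ.erase k, if f j = h j then (1:ℂ) else 0) = 0 :=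
      Finset.prod_eq_zero (Finset.mem_erase.mpr ⟨hj, Finset.mem_univ j⟩) (by simp [hne])
    have h2 : ∀ x : Fin d, ¬ (h = Function.update f k x) := by
      intro x e
      apply hne
      have := congrFun e j
      rw [Function.update_of_ne hj] at this
      exact this.symm
    simp [h1, h2]

private lemma sum_delta (k : Fin N) (f : Fin N → Fin d) (F : (Fin N → Fin d) → ℂ) :
    ∑ h, (∏ j ∈ Finset.univ.erase k, if f j = h j then (1:ℂ) else 0) * F h
      = ∑ x, F (Function.update f k x) := by
  simp_rw [delta_eq_sum k f, Finset.sum_mul, ite_mul, one_mul, zero_mul]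
  rw [Finset.sum_comm]
  simp [Finset.sum_ite_eq']

private lemma sum_delta' (k : Fin N) (g : Fin N → Fin d) (F : (Fin N → Fin d) → ℂ) :
    ∑ h, F h * (∏ j ∈ Finset.univ.erase k, if h j = g j then (1:ℂ) else 0)
      = ∑ x, F (Function.update g k x) := by
  have e : ∀ h : Fin N → Fin d, (∏ j ∈ Finset.univ.erase k, if h j = g j then (1:ℂ) else 0)
      = ∏ j ∈ Finset.univ.erase k, if g j = h j then (1:ℂ) else 0 :=
    fun h => Finset.prod_congr rfl fun j _ => by
      by_cases hj : h j = g j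
      · simp [hj]
      · rw [if_neg hj, if_neg fun e => hj e.symm]
  simp_rw [e, mul_comm (F _)]
  exact sum_delta k g F

lemma site_mul (a b : Matrix (Fin d) (Fin d) ℂ) (k : Fin N) :
    site a k * site b k = site (a * b) k := by
  ext f g
  simp only [Matrix.mul_apply, site]
  have e : ∀ h : Fin N → Fin d, (a (f k) (h k) * ∏ j ∈ Finset.univ.erase k, if f j = h j then (1:ℂ) else 0) *
        (b (h k) (g k) * ∏ j ∈ Finset.univ.erase k, if h j = g j then (1:ℂ) else 0)
      = (∏ j ∈ Finset.univ.erase k, if f j = h j then (1:ℂ) else 0) *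
        (a (f k) (h k) * (b (h k) (g k) *
          ∏ j ∈ Finset.univ.erase k, if h j = g j then (1:ℂ) else 0)) := fun h => by ring
  simp_rw [e]
  rw [sum_delta k f]
  have e2 : ∀ x : Fin d,
      a (f k) (Function.update f k x k) * (b (Function.update f k x k) (g k) *
        ∏ j ∈ Finset.univ.erase k, if Function.update f k x j = g j then (1:ℂ) else 0)
      = a (f k) x * b x (g k) *
        ∏ j ∈ Finset.univ.erase k, if f j = g j then (1:ℂ) else 0 := by
    intro x
    rw [Function.update_self]
    rw [Finset.prod_congr rfl fun j hj => by
      rw [Function.update_of_ne (Finset.ne_of_mem_erase hj)]]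
    ring
  simp_rw [e2]
  rw [← Finset.sum_mul]

lemma site_one (k : Fin N) : site (1 : Matrix (Fin d) (Fin d) ℂ) k = 1 := by
  ext f g
  simp only [site, Matrix.one_apply]
  rw [Finset.mul_prod_erase Finset.univ (fun j => if f j = g j then (1:ℂ) else 0)
    (Finset.mem_univ k), Finset.prod_boole]
  simp [funext_iff]

lemma site_smul (c : ℂ) (a : Matrix (Fin d) (Fin d) ℂ) (k : Fin N) :
    site (c • a) k = c • site a k := by
  ext f g
  simp [site, Matrix.smul_apply, mul_assoc]

lemma site_add (a b : Matrix (Fin d) (Fin d) ℂ) (k : Fin N) :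
    site (a + b) k = site a k + site b k := by
  ext f g
  simp [site, Matrix.add_apply, add_mul]

lemma site_star (a : Matrix (Fin d) (Fin d) ℂ) (k : Fin N) :
    site (star a) k = star (site a k) := by
  ext f g
  simp only [site, Matrix.star_apply, star_mul']
  congr 1
  rw [star_prod]
  exact Finset.prod_congr rfl fun l _ => by
    by_cases h : g l = f l
    · rw [if_pos h, if_pos h.symm, star_one]
    · rw [if_neg h, if_neg fun e => h e.symm, star_zero]

lemma site_mul_apply_ne {j k : Fin N} (hjk : j ≠ k) (a b : Matrix (Fin d) (Fin d) ℂ)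
    (f g : Fin N → Fin d) :
    (site a j * site b k) f g
      = a (f j) (g j) * b (f k) (g k) *
        ∏ l ∈ (Finset.univ.erase j).erase k, (if f l = g l then (1:ℂ) else 0) := by
  simp only [Matrix.mul_apply, site]
  have e : ∀ h : Fin N → Fin d,
      (a (f j) (h j) * ∏ l ∈ Finset.univ.erase j, if f l = h l then (1:ℂ) else 0) *
        (b (h k) (g k) * ∏ l ∈ Finset.univ.erase k, if h l = g l then (1:ℂ) else 0)
      = (∏ l ∈ Finset.univ.erase j, if f l = h l then (1:ℂ) else 0) *
        (a (f j) (h j) * (b (h k) (g k) *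
          ∏ l ∈ Finset.univ.erase k, if h l = g l then (1:ℂ) else 0)) := fun h => by ring
  simp_rw [e]
  rw [sum_delta j f]
  have hjmem : j ∈ Finset.univ.erase k := Finset.mem_erase.mpr ⟨hjk, Finset.mem_univ j⟩
  have e2 : ∀ x : Fin d,
      a (f j) (Function.update f j x j) * (b (Function.update f j x k) (g k) *
        ∏ l ∈ Finset.univ.erase k, if Function.update f j x l = g l then (1:ℂ) else 0)
      = (if x = g j then (1:ℂ) else 0) * (a (f j) x * b (f k) (g k) *
          ∏ l ∈ (Finset.univ.erase k).erase j, if f l = g l then (1:ℂ) else 0) := by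
    intro x
    rw [Function.update_self, Function.update_of_ne (Ne.symm hjk)]
    rw [← Finset.mul_prod_erase _ _ hjmem, Function.update_self]
    rw [Finset.prod_congr rfl fun l hl => by
      rw [Function.update_of_ne (Finset.ne_of_mem_erase hl)]]
    ring
  simp_rw [e2, ite_mul, one_mul, zero_mul]
  rw [Finset.sum_ite_eq' Finset.univ (g j)]
  simp only [Finset.mem_univ, if_true]
  rw [Finset.erase_right_comm]

lemma site_comm_of_ne {j k : Fin N} (hjk : j ≠ k) (a b : Matrix (Fin d) (Fin d) ℂ) :
    Commute (site a j) (site b k) := by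
  unfold Commute SemiconjBy
  ext f g
  rw [site_mul_apply_ne hjk, site_mul_apply_ne hjk.symm, Finset.erase_right_comm]
  ring

noncomputable local instance (n : Type*) [Fintype n] [DecidableEq n] :
    CStarAlgebra (Matrix n n ℂ) := Matrix.instCStarAlgebra

lemma norm_site_le (x : Matrix (Fin d) (Fin d) ℂ) (k : Fin N) : ‖site x k‖ ≤ ‖x‖ := by
  let φ : Matrix (Fin d) (Fin d) ℂ →⋆ₐ[ℂ] Matrix (Fin N → Fin d) (Fin N → Fin d) ℂ :=
  { toFun := fun m => site m k
    map_one' := site_one k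
    map_mul' := fun a b => (site_mul a b k).symm
    map_zero' := by ext f g; simp [site]
    map_add' := fun a b => site_add a b k
    commutes' := fun c => by
      show site ((algebraMap ℂ (Matrix (Fin d) (Fin d) ℂ)) c) k = _
      rw [Algebra.algebraMap_eq_smul_one, Algebra.algebraMap_eq_smul_one,
        site_smul, site_one]
    map_star' := fun a => site_star a k }
  exact NonUnitalStarAlgHom.norm_apply_le φ x

section General
variable {A : Type*} [NormedRing A] [NormedSpace ℝ A] [IsScalarTower ℝ A A]
  [SMulCommClass ℝ A A] [CompleteSpace A]

private lemma pow_comm_norm (Δ X : A) {δ : ℝ} (hδ : ‖Δ‖ ≤ δ) (n : ℕ) :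
    ‖Δ ^ n * X - X * Δ ^ n‖ ≤ n * δ ^ (n - 1) * ‖Δ * X - X * Δ‖ := by
  have hδ0 : 0 ≤ δ := le_trans (norm_nonneg Δ) hδ
  induction n with
  | zero => simp
  | succ m ih =>
    have hid : Δ ^ (m + 1) * X - X * Δ ^ (m + 1)
        = Δ * (Δ ^ m * X - X * Δ ^ m) + (Δ * X - X * Δ) * Δ ^ m := by
      have hc : Δ * Δ ^ m = Δ ^ m * Δ := ((Commute.refl Δ).pow_right m).eq
      simp only [pow_succ, mul_sub, sub_mul, mul_assoc]
      rw [← mul_assoc Δ (Δ ^ m) X, hc, mul_assoc]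
      abel
    rcases Nat.eq_zero_or_pos m with hm | hm
    · subst hm
      simpa using le_of_eq (congrArg norm (by noncomm_ring :
        Δ ^ 1 * X - X * Δ ^ 1 = Δ * X - X * Δ))
    · have hpm : ‖Δ ^ m‖ ≤ δ ^ m :=
        (norm_pow_le' Δ hm).trans (pow_le_pow_left₀ (norm_nonneg _) hδ m)
      have h1 : δ * δ ^ (m - 1) = δ ^ m := by
        rw [← pow_succ']
        congr 1
        omega
      calc ‖Δ ^ (m + 1) * X - X * Δ ^ (m + 1)‖
          ≤ ‖Δ * (Δ ^ m * X - X * Δ ^ m)‖ + ‖(Δ * X - X * Δ) * Δ ^ m‖ := by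
            rw [hid]; exact norm_add_le _ _
        _ ≤ ‖Δ‖ * ‖Δ ^ m * X - X * Δ ^ m‖ + ‖Δ * X - X * Δ‖ * ‖Δ ^ m‖ :=
            add_le_add (norm_mul_le _ _) (norm_mul_le _ _)
        _ ≤ δ * (m * δ ^ (m - 1) * ‖Δ * X - X * Δ‖) + ‖Δ * X - X * Δ‖ * δ ^ m := by
            refine add_le_add (mul_le_mul hδ ih (norm_nonneg _) hδ0) ?_
            exact mul_le_mul_of_nonneg_left hpm (norm_nonneg _)
        _ = ((m : ℝ) * (δ * δ ^ (m - 1)) + δ ^ m) * ‖Δ * X - X * Δ‖ := by ring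
        _ = (m + 1 : ℕ) * δ ^ ((m + 1) - 1) * ‖Δ * X - X * Δ‖ := by
            rw [h1]
            push_cast [Nat.add_sub_cancel]
            ring

private lemma inner_id (Δ X : A) (n : ℕ) :
    Δ * (Δ ^ n * X - X * Δ ^ n) - (Δ ^ n * X - X * Δ ^ n) * Δ
      = Δ ^ n * (Δ * X - X * Δ) - (Δ * X - X * Δ) * Δ ^ n := by
  have hc : Δ * Δ ^ n = Δ ^ n * Δ := ((Commute.refl Δ).pow_right n).eq
  simp only [mul_sub, sub_mul, mul_assoc]
  rw [← mul_assoc Δ (Δ ^ n) X, hc, mul_assoc, ← hc]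
  abel

private lemma hasSum_comm (c : ℕ → ℝ) (Δ X G : A)
    (hG : HasSum (fun n => c n • Δ ^ n) G) :
    HasSum (fun n => c n • (Δ ^ n * X - X * Δ ^ n)) (G * X - X * G) := by
  have h := (hG.mul_right X).sub (hG.mul_left X)
  have e : (fun n => c n • Δ ^ n * X - X * (c n • Δ ^ n))
      = fun n => c n • (Δ ^ n * X - X * Δ ^ n) := by
    funext n
    rw [smul_sub, smul_mul_assoc, mul_smul_comm]
  rwa [e] at h

private lemma comm_swap (c : ℕ → ℝ) (Δ X G : A)
    (hG : HasSum (fun n => c n • Δ ^ n) G) :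
    Δ * (G * X - X * G) - (G * X - X * G) * Δ
      = G * (Δ * X - X * Δ) - (Δ * X - X * Δ) * G := by
  have hW := hasSum_comm c Δ X G hG
  have h1 := (hW.mul_left Δ).sub (hW.mul_right Δ)
  have h2 := hasSum_comm c Δ (Δ * X - X * Δ) G hG
  have e : (fun n => Δ * (c n • (Δ ^ n * X - X * Δ ^ n))
        - c n • (Δ ^ n * X - X * Δ ^ n) * Δ)
      = fun n => c n • (Δ ^ n * (Δ * X - X * Δ) - (Δ * X - X * Δ) * Δ ^ n) := by
    funext n
    rw [mul_smul_comm, smul_mul_assoc, ← smul_sub, inner_id]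
  rw [e] at h1
  exact h1.unique h2

/-- Bound on the commutator of `Γ(Δ)` with `X`. -/
private lemma gamma_comm_bound (c : ℕ → ℝ) (Δ X : A) {δ : ℝ} (hδ : ‖Δ‖ ≤ δ)
    (hs1 : Summable fun n : ℕ => |c n| * δ ^ n)
    (hs2 : Summable fun n : ℕ => (n : ℝ) * |c n| * δ ^ (n - 1)) :
    ‖(∑' n : ℕ, c n • Δ ^ n) * X - X * (∑' n : ℕ, c n • Δ ^ n)‖
      ≤ (∑' n : ℕ, (n : ℝ) * |c n| * δ ^ (n - 1)) * ‖Δ * X - X * Δ‖ := by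
  have hδ0 : 0 ≤ δ := le_trans (norm_nonneg Δ) hδ
  have hsmul : Summable fun n : ℕ => c n • Δ ^ n := by
    rw [← summable_nat_add_iff 1]
    refine Summable.of_norm (((summable_nat_add_iff 1).mpr hs1).of_nonneg_of_le
      (fun n => norm_nonneg _) fun n => ?_)
    rw [norm_smul, Real.norm_eq_abs]
    exact mul_le_mul_of_nonneg_left
      ((norm_pow_le' Δ (Nat.succ_pos n)).trans (pow_le_pow_left₀ (norm_nonneg _) hδ _))
      (abs_nonneg _)
  have hGsum := hasSum_comm c Δ X _ hsmul.hasSum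
  set C := ‖Δ * X - X * Δ‖ with hC
  have hb : ∀ n : ℕ, ‖c n • (Δ ^ n * X - X * Δ ^ n)‖
      ≤ (n : ℝ) * |c n| * δ ^ (n - 1) * C := by
    intro n
    rw [norm_smul, Real.norm_eq_abs]
    calc |c n| * ‖Δ ^ n * X - X * Δ ^ n‖
        ≤ |c n| * ((n : ℝ) * δ ^ (n - 1) * C) :=
          mul_le_mul_of_nonneg_left (pow_comm_norm Δ X hδ n) (abs_nonneg _)
      _ = (n : ℝ) * |c n| * δ ^ (n - 1) * C := by ring
  have hsb : Summable fun n : ℕ => (n : ℝ) * |c n| * δ ^ (n - 1) * C := hs2.mul_right C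
  have hnorm : Summable fun n : ℕ => ‖c n • (Δ ^ n * X - X * Δ ^ n)‖ :=
    hsb.of_nonneg_of_le (fun n => norm_nonneg _) hb
  calc ‖(∑' n : ℕ, c n • Δ ^ n) * X - X * (∑' n : ℕ, c n • Δ ^ n)‖
      = ‖∑' n : ℕ, c n • (Δ ^ n * X - X * Δ ^ n)‖ := by rw [hGsum.tsum_eq]
    _ ≤ ∑' n : ℕ, ‖c n • (Δ ^ n * X - X * Δ ^ n)‖ := norm_tsum_le_tsum_norm hnorm
    _ ≤ ∑' n : ℕ, (n : ℝ) * |c n| * δ ^ (n - 1) * C := Summable.tsum_le_tsum hb hnorm hsb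
    _ = (∑' n : ℕ, (n : ℝ) * |c n| * δ ^ (n - 1)) * C := tsum_mul_right

end General



/-- The collective operator `Δ_N = (1/N) Σ_k Σ_α r_α v_α^(k)`. -/
noncomputable def DeltaN {d N q : ℕ} (r : Fin q → ℝ) (v : Fin q → Matrix (Fin d) (Fin d) ℂ) :
    Matrix (Fin N → Fin d) (Fin N → Fin d) ℂ :=
  (N : ℂ)⁻¹ • ∑ k : Fin N, ∑ α, (r α : ℂ) • site (v α) k

variable {d N q : ℕ}

private lemma comm_reduce (ρ : Fin q → ℝ) (v : Fin q → Matrix (Fin d) (Fin d) ℂ)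
    (S : Finset (Fin N)) (X : Matrix (Fin N → Fin d) (Fin N → Fin d) ℂ)
    (hX : ∀ k ∉ S, ∀ m : Matrix (Fin d) (Fin d) ℂ, Commute (site m k) X) :
    DeltaN ρ v * X - X * DeltaN ρ v
      = (N : ℂ)⁻¹ • ∑ k ∈ S, ∑ α, (ρ α : ℂ) • (site (v α) k * X - X * site (v α) k) := by
  have h1 : DeltaN ρ v * X - X * DeltaN ρ v
      = (N : ℂ)⁻¹ • ∑ k : Fin N, ∑ α, (ρ α : ℂ) •
          (site (v α) k * X - X * site (v α) k) := by
    simp only [DeltaN, smul_mul_assoc, mul_smul_comm, Finset.sum_mul, Finset.mul_sum,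
      ← smul_sub, ← Finset.sum_sub_distrib]
  rw [h1]
  congr 1
  refine (Finset.sum_subset (Finset.subset_univ S) fun k _ hk =>
    Finset.sum_eq_zero fun α _ => ?_).symm
  rw [(hX k hk (v α)).eq, sub_self, smul_zero]

private lemma key_bound (ρ : Fin q → ℝ) (v : Fin q → Matrix (Fin d) (Fin d) ℂ)
    (hv : ∀ α, ‖v α‖ ≤ 1) (S : Finset (Fin N))
    (X : Matrix (Fin N → Fin d) (Fin N → Fin d) ℂ)
    (hX : ∀ k ∉ S, ∀ m : Matrix (Fin d) (Fin d) ℂ, Commute (site m k) X) :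
    ‖DeltaN ρ v * X - X * DeltaN ρ v‖
      ≤ 2 * S.card * (∑ α, |ρ α|) / N * ‖X‖ := by
  rw [comm_reduce ρ v S X hX, norm_smul, norm_inv, Complex.norm_natCast]
  have h2 : ∀ k ∈ S, ‖∑ α, (ρ α : ℂ) • (site (v α) k * X - X * site (v α) k)‖
      ≤ (∑ α, |ρ α|) * (2 * ‖X‖) := by
    intro k _
    refine (norm_sum_le _ _).trans ?_
    have hb : ∀ α, ‖(ρ α : ℂ) • (site (v α) k * X - X * site (v α) k)‖
        ≤ |ρ α| * (2 * ‖X‖) := by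
      intro α
      rw [norm_smul, Complex.norm_real, Real.norm_eq_abs]
      refine mul_le_mul_of_nonneg_left ?_ (abs_nonneg _)
      have hsite : ‖site (v α) k‖ ≤ 1 := (norm_site_le _ _).trans (hv α)
      calc ‖site (v α) k * X - X * site (v α) k‖
          ≤ ‖site (v α) k * X‖ + ‖X * site (v α) k‖ := norm_sub_le _ _
        _ ≤ ‖site (v α) k‖ * ‖X‖ + ‖X‖ * ‖site (v α) k‖ :=
            add_le_add (norm_mul_le _ _) (norm_mul_le _ _)
        _ ≤ 1 * ‖X‖ + ‖X‖ * 1 :=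
            add_le_add (mul_le_mul_of_nonneg_right hsite (norm_nonneg _))
              (mul_le_mul_of_nonneg_left hsite (norm_nonneg _))
        _ = 2 * ‖X‖ := by ring
    refine (Finset.sum_le_sum fun α _ => hb α).trans ?_
    rw [← Finset.sum_mul]
  have h3 : ‖∑ k ∈ S, ∑ α, (ρ α : ℂ) • (site (v α) k * X - X * site (v α) k)‖
      ≤ S.card * ((∑ α, |ρ α|) * (2 * ‖X‖)) := by
    refine (norm_sum_le _ _).trans ?_
    have := Finset.sum_le_card_nsmul S _ _ h2
    rwa [nsmul_eq_mul] at this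
  refine (mul_le_mul_of_nonneg_left h3 (by positivity)).trans_eq ?_
  ring


/-- For `Γ(z) = Σ cₙ zⁿ` with `γ(r) = Σ |cₙ| rⁿ < ∞` and `γ'(r) = Σ n|cₙ|r^(n-1) < ∞`, `Δ_N`
self-adjoint with `‖Δ_N‖ ≤ δ ≤ r`, and `O` supported on a set `S` of `N_O` sites,
`‖[Γ(Δ_N), [Γ(Δ_N), O]]‖ ≤ (4 N_O²/N²) ‖O‖ δ² γ'(δ)²`. -/
theorem norm_double_commutator_Gamma_le {d N q : ℕ} (c : ℕ → ℝ) (r : ℝ)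
    (ρ : Fin q → ℝ) (v : Fin q → Matrix (Fin d) (Fin d) ℂ)
    (hsa : ∀ α, IsSelfAdjoint (v α)) (hv : ∀ α, ‖v α‖ ≤ 1)
    (hγ : Summable fun n : ℕ => |c n| * r ^ n)
    (hγ' : Summable fun n : ℕ => (n : ℝ) * |c n| * r ^ (n - 1))
    (hδr : (∑ α, |ρ α|) ≤ r)
    (hΔ : ‖DeltaN (N := N) ρ v‖ ≤ ∑ α, |ρ α|)
    (O : Matrix (Fin N → Fin d) (Fin N → Fin d) ℂ) (S : Finset (Fin N))
    (hsupp : ∀ k ∉ S, ∀ m : Matrix (Fin d) (Fin d) ℂ, Commute (site m k) O) :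
    ‖(∑' n : ℕ, c n • (DeltaN (N := N) ρ v) ^ n) *
          ((∑' n : ℕ, c n • (DeltaN (N := N) ρ v) ^ n) * O -
            O * (∑' n : ℕ, c n • (DeltaN (N := N) ρ v) ^ n)) -
        ((∑' n : ℕ, c n • (DeltaN (N := N) ρ v) ^ n) * O -
            O * (∑' n : ℕ, c n • (DeltaN (N := N) ρ v) ^ n)) *
          (∑' n : ℕ, c n • (DeltaN (N := N) ρ v) ^ n)‖ ≤
      4 * S.card ^ 2 / N ^ 2 * ‖O‖ * (∑ α, |ρ α|) ^ 2 *
        (∑' n : ℕ, (n : ℝ) * |c n| * (∑ α, |ρ α|) ^ (n - 1)) ^ 2 := by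
  set Δ := DeltaN (N := N) ρ v with hΔdef
  set δ := ∑ α, |ρ α| with hδdef
  have hδ0 : 0 ≤ δ := Finset.sum_nonneg fun α _ => abs_nonneg _
  have hs1δ : Summable fun n : ℕ => |c n| * δ ^ n :=
    hγ.of_nonneg_of_le (fun n => by positivity)
      (fun n => mul_le_mul_of_nonneg_left (pow_le_pow_left₀ hδ0 hδr n) (abs_nonneg _))
  have hs2δ : Summable fun n : ℕ => (n : ℝ) * |c n| * δ ^ (n - 1) :=
    hγ'.of_nonneg_of_le (fun n => by positivity)
      (fun n => mul_le_mul_of_nonneg_left (pow_le_pow_left₀ hδ0 hδr (n - 1))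
        (by positivity))
  set g' := ∑' n : ℕ, (n : ℝ) * |c n| * δ ^ (n - 1) with hg'def
  have hg'0 : 0 ≤ g' := tsum_nonneg fun n => by positivity
  set G := ∑' n : ℕ, c n • Δ ^ n with hGdef
  set K := 2 * (S.card : ℝ) * δ / N with hKdef
  have hK0 : 0 ≤ K := by
    rw [hKdef]
    positivity
  set Y := Δ * O - O * Δ with hYdef
  set W := G * O - O * G with hWdef
  have hsuppY : ∀ k ∉ S, ∀ m : Matrix (Fin d) (Fin d) ℂ, Commute (site m k) Y := by
    intro j hj m
    rw [hYdef, comm_reduce ρ v S O hsupp]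
    refine Commute.smul_right ?_ _
    refine Commute.sum_right _ _ _ fun k hk => Commute.sum_right _ _ _ fun α _ => ?_
    have hne : j ≠ k := by rintro rfl; exact hj hk
    exact Commute.smul_right
      (((site_comm_of_ne hne m (v α)).mul_right (hsupp j hj m)).sub_right
        ((hsupp j hj m).mul_right (site_comm_of_ne hne m (v α)))) _
  have hsmul : Summable fun n : ℕ => c n • Δ ^ n := by
    rw [← summable_nat_add_iff 1]
    refine Summable.of_norm (((summable_nat_add_iff 1).mpr hs1δ).of_nonneg_of_le
      (fun n => norm_nonneg _) fun n => ?_)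
    rw [norm_smul, Real.norm_eq_abs]
    exact mul_le_mul_of_nonneg_left
      ((norm_pow_le' Δ (Nat.succ_pos n)).trans (pow_le_pow_left₀ (norm_nonneg _) hΔ _))
      (abs_nonneg _)
  have b1 : ‖G * W - W * G‖ ≤ g' * ‖Δ * W - W * Δ‖ :=
    gamma_comm_bound c Δ W hΔ hs1δ hs2δ
  have hswap : Δ * W - W * Δ = G * Y - Y * G := comm_swap c Δ O G hsmul.hasSum
  have b3 : ‖G * Y - Y * G‖ ≤ g' * ‖Δ * Y - Y * Δ‖ :=
    gamma_comm_bound c Δ Y hΔ hs1δ hs2δ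
  have b4 : ‖Δ * Y - Y * Δ‖ ≤ K * ‖Y‖ := key_bound ρ v hv S Y hsuppY
  have b5 : ‖Y‖ ≤ K * ‖O‖ := key_bound ρ v hv S O hsupp
  calc ‖G * W - W * G‖
      ≤ g' * ‖Δ * W - W * Δ‖ := b1
    _ = g' * ‖G * Y - Y * G‖ := by rw [hswap]
    _ ≤ g' * (g' * ‖Δ * Y - Y * Δ‖) := mul_le_mul_of_nonneg_left b3 hg'0
    _ ≤ g' * (g' * (K * ‖Y‖)) :=
        mul_le_mul_of_nonneg_left (mul_le_mul_of_nonneg_left b4 hg'0) hg'0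
    _ ≤ g' * (g' * (K * (K * ‖O‖))) := by
        refine mul_le_mul_of_nonneg_left (mul_le_mul_of_nonneg_left
          (mul_le_mul_of_nonneg_left b5 hK0) hg'0) hg'0
    _ = 4 * S.card ^ 2 / N ^ 2 * ‖O‖ * δ ^ 2 * g' ^ 2 := by
        rw [hKdef]
        ring
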